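/- Let x, y, s, t be integers such that x^2 + s^2 - s^4 = 1 - t^2 and y^2 + t^2 - t^4 = 1 - s^2. Then (x,y,s,t) = (0, ±1, 0, ±1), or (±1, 0, ±1, 0), or (±(u^2-1), ±(u^2-1), ±u, ±u) for some integer u. -/
import Mathlib

lemma aux_between (x s t : ℤ) (h : x^2 = s^4 - s^2 - t^2 + 1)
    (hs : t^2 < s^2) (ht : t ≠ 0) : False := by
  have ht2 : 1 ≤ t^2 := by rcases lt_or_gt_of_ne ht with h | h <;> nlinarith
  have h1 : (s^2-1)^2 < x^2 := by nlinarith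
  have h2 : x^2 < (s^2)^2 := by nlinarith
  have h3 : |x| ≤ s^2 - 1 := by
    by_contra hc
    push_neg at hc
    have : s^2 ≤ |x| := by omega
    nlinarith [sq_abs x, abs_nonneg x]
  nlinarith [sq_abs x, abs_nonneg x]

theorem stmt_6 (x y s t : ℤ)
    (h1 : x^2 + s^2 - s^4 = 1 - t^2) (h2 : y^2 + t^2 - t^4 = 1 - s^2) :
    (x = 0 ∧ (y = 1 ∨ y = -1) ∧ s = 0 ∧ (t = 1 ∨ t = -1)) ∨
    ((x = 1 ∨ x = -1) ∧ y = 0 ∧ (s = 1 ∨ s = -1) ∧ t = 0) ∨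
    (∃ u : ℤ, (x = u^2 - 1 ∨ x = -(u^2 - 1)) ∧ (y = u^2 - 1 ∨ y = -(u^2 - 1)) ∧
      (s = u ∨ s = -u) ∧ (t = u ∨ t = -u)) := by
  have hx : x^2 = s^4 - s^2 - t^2 + 1 := by linarith
  have hy : y^2 = t^4 - t^2 - s^2 + 1 := by linarith
  rcases lt_trichotomy (s^2) (t^2) with hst | hst | hst
  · -- t^2 > s^2 : must have s = 0
    have hs0 : s = 0 := by
      by_contra hs
      exact aux_between y t s (by linarith) hst hs
    subst hs0
    have ht1 : t^2 = 1 := by nlinarith [sq_nonneg y]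
    have hx0 : x = 0 := by nlinarith [sq_nonneg x]
    have hy1 : y^2 = 1 := by nlinarith
    left
    refine ⟨hx0, ?_, rfl, ?_⟩
    · have : (y-1)*(y+1) = 0 := by nlinarith
      rcases mul_eq_zero.mp this with h | h
      · left; omega
      · right; omega
    · have : (t-1)*(t+1) = 0 := by nlinarith
      rcases mul_eq_zero.mp this with h | h
      · left; omega
      · right; omega
  · -- s^2 = t^2 : case 3 with u = s
    right; right
    refine ⟨s, ?_, ?_, Or.inl rfl, ?_⟩
    · have : (x - (s^2-1))*(x + (s^2-1)) = 0 := by nlinarith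
      rcases mul_eq_zero.mp this with h | h
      · left; linarith
      · right; linarith
    · have : (y - (s^2-1))*(y + (s^2-1)) = 0 := by nlinarith
      rcases mul_eq_zero.mp this with h | h
      · left; linarith
      · right; linarith
    · have : (t - s)*(t + s) = 0 := by nlinarith
      rcases mul_eq_zero.mp this with h | h
      · left; linarith
      · right; linarith
  · -- s^2 > t^2 : must have t = 0
    have ht0 : t = 0 := by
      by_contra ht
      exact aux_between x s t hx hst ht
    subst ht0
    have hs1 : s^2 = 1 := by nlinarith [sq_nonneg y]
    have hy0 : y = 0 := by nlinarith [sq_nonneg y]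
    have hx1 : x^2 = 1 := by nlinarith
    right; left
    refine ⟨?_, hy0, ?_, rfl⟩
    · have : (x-1)*(x+1) = 0 := by nlinarith
      rcases mul_eq_zero.mp this with h | h
      · left; omega
      · right; omega
    · have : (s-1)*(s+1) = 0 := by nlinarith
      rcases mul_eq_zero.mp this with h | h
      · left; omega
      · right; omega
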